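/- A phase-flip on qubit 4 of the encoded state produces error syndrome 0010 and leaves the data unchanged: for every c = (c(0), c(1)) ∈ ℂ² there is a nonzero complex scalar α independent of c such that T(S₄(f(c))) = α · |0010⟩ ⊗ (c(0)|0⟩ + c(1)|1⟩). -/

import Mathlib

open scoped BigOperators

noncomputable section

/-- The 5-qubit state space `V₅ = (Fin 5 → Fin 2) → ℂ ≅ ℂ^32` with the standard
Hermitian inner product. -/
abbrev V5 : Type := EuclideanSpace ℂ (Fin 5 → Fin 2)

/-- The phase exponent `γ(x,y) = x(y₀+y₁+y₂) + y₀y₁ + y₀y₃ + y₁y₄ + y₂y₃ + y₂y₄ + y₃y₄`,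
read modulo 2 via `(-1)^·`. -/
def gam (x : Fin 2) (y : Fin 5 → Fin 2) : ℕ :=
  x.val * ((y 0).val + (y 1).val + (y 2).val)
    + (y 0).val * (y 1).val + (y 0).val * (y 3).val + (y 1).val * (y 4).val
    + (y 2).val * (y 3).val + (y 2).val * (y 4).val + (y 3).val * (y 4).val

/-- The graph-code encoding `f : ℂ² → V₅`, `f(c)(y) = Σ_x (−1)^{γ(x,y)} c(x)`
(normalization factors omitted). -/
def enc (c : Fin 2 → ℂ) : V5 := WithLp.toLp 2 fun y => ∑ x : Fin 2, (-1 : ℂ) ^ gam x y * c x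

/-- The decoding phase exponent `θ`, with `z = (l₀, l₁, l₃, l₄, x̂)`. -/
def theta (y z : Fin 5 → Fin 2) : ℕ :=
  (z 4).val * ((y 0).val + (y 1).val + (y 2).val)
    + (y 0).val * (y 1).val + (y 0).val * (y 3).val + (y 1).val * (y 4).val
    + (y 2).val * (y 3).val + (y 2).val * (y 4).val + (y 3).val * (y 4).val
    + (y 0).val * (z 0).val + (y 1).val * (z 1).val + (y 3).val * (z 2).val
    + (y 4).val * (z 3).val

/-- The graph decoding operator `T : V₅ → V₅`,
`T|y⟩ = Σ_{l₀l₁l₃l₄, x̂} (−1)^θ |l₀l₁l₃l₄x̂⟩`. -/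
def dec (ψ : V5) : V5 := WithLp.toLp 2 fun z => ∑ y : Fin 5 → Fin 2, (-1 : ℂ) ^ theta y z * ψ y

/-- The product state `|s₀s₁s₂s₃⟩ ⊗ (a|0⟩ + b|1⟩)` in `V₅`: four syndrome qubits
followed by one data qubit. -/
def synData (s : Fin 4 → Fin 2) (a b : ℂ) : V5 :=
  WithLp.toLp 2 fun (y : Fin 5 → Fin 2) => (if y 0 = s 0 ∧ y 1 = s 1 ∧ y 2 = s 2 ∧ y 3 = s 3 then (1 : ℂ) else 0)
    * (if y 4 = 0 then a else b)

/-- Bit-flip (Pauli `σ_X`) on qubit `i` (0-indexed: qubit `j` of the paper is `i = j - 1`). -/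
def bitFlip (i : Fin 5) (ψ : V5) : V5 := WithLp.toLp 2 fun y => ψ (Function.update y i (1 - y i))

/-- Phase-flip (Pauli `σ_Z`) on qubit `i` (0-indexed). -/
def phaseFlip (i : Fin 5) (ψ : V5) : V5 := WithLp.toLp 2 fun y => (-1 : ℂ) ^ (y i).val * ψ y

lemma key_sum : ∀ (x : Fin 2) (z : Fin 5 → Fin 2),
    (∑ y : Fin 5 → Fin 2, (-1 : ℤ) ^ (theta y z + (y 3).val + gam x y)) =
      if z 0 = 0 ∧ z 1 = 0 ∧ z 2 = 1 ∧ z 3 = 0 ∧ z 4 = x then 32 else 0 := by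
  decide

/-- A phase-flip on qubit 4 produces syndrome `0010` and leaves the data unchanged: `T(S₄ f(c)) = α |0010⟩ ⊗ (c(0)|0⟩ + c(1)|1⟩)` with `α ≠ 0` independent of `c`. -/
theorem phase_flip_qubit4_syndrome :
    ∃ α : ℂ, α ≠ 0 ∧ ∀ c : Fin 2 → ℂ,
      dec (phaseFlip 3 (enc c)) = α • synData ![0, 0, 1, 0] (c 0) (c 1) := by
  refine ⟨32, by norm_num, fun c => ?_⟩
  ext z
  have hL : dec (phaseFlip 3 (enc c)) z =
      ∑ x : Fin 2, ((∑ y : Fin 5 → Fin 2,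
        (-1 : ℤ) ^ (theta y z + (y 3).val + gam x y) : ℤ) : ℂ) * c x := by
    simp only [dec, phaseFlip, enc, WithLp.ofLp_toLp, Finset.mul_sum]
    rw [Finset.sum_comm]
    push_cast
    congr 1; funext x
    rw [Finset.sum_mul]
    congr 1; funext y
    rw [pow_add, pow_add]; ring
  rw [hL]
  simp only [key_sum]
  have h2 : ∀ b : Fin 2, b = 0 ∨ b = 1 := by decide
  rcases h2 (z 0) with h0 | h0 <;> rcases h2 (z 1) with h1 | h1 <;>
    rcases h2 (z 2) with h2' | h2' <;> rcases h2 (z 3) with h3 | h3 <;>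
    rcases h2 (z 4) with h4 | h4 <;>
    simp [synData, Fin.sum_univ_two, h0, h1, h2', h3, h4, Matrix.cons_val_zero,
      Matrix.cons_val_one]
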